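/- Let α ∈ (0,1) and γ > 0. Let X and Y be independent real-valued random variables on a probability space such that X is distributed Exp(1−α), Y ≥ 0 almost surely, and min(X, Y) is distributed Exp(γ). If P[Y < X] > α, then γ > 1 and Y is distributed Exp(α + (γ−1)); in particular, Y is distributed Exp(α + ε) for some ε > 0. -/

import Mathlib

open MeasureTheory

/-- If `X ~ Exp(1-α)` and `Y ≥ 0` are independent with `min(X,Y) ~ Exp(γ)` (distributions
expressed via survival functions `P[Z ≥ z] = e^(-λ z)` for `z ≥ 0`), and the adversary is
strictly profitable, i.e. `P[Y < X] > α`, then `γ > 1` and `Y ~ Exp(α + (γ-1))`;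
in particular `Y ~ Exp(α + ε)` for some `ε > 0`. -/
theorem stmt_9 {Ω : Type*} [MeasurableSpace Ω] (μ : Measure Ω) [IsProbabilityMeasure μ]
    (α γ : ℝ) (hα0 : 0 < α) (hα1 : α < 1) (hγ : 0 < γ)
    (X Y : Ω → ℝ) (hXm : Measurable X) (hYm : Measurable Y)
    (hindep : ProbabilityTheory.IndepFun X Y μ)
    (hX : ∀ z : ℝ, 0 ≤ z → (μ {ω | z ≤ X ω}).toReal = Real.exp (-(1 - α) * z))
    (hY0 : ∀ᵐ ω ∂μ, 0 ≤ Y ω)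
    (hmin : ∀ z : ℝ, 0 ≤ z →
      (μ {ω | z ≤ min (X ω) (Y ω)}).toReal = Real.exp (-γ * z))
    (hprofit : α < (μ {ω | Y ω < X ω}).toReal) :
    1 < γ ∧
      (∀ z : ℝ, 0 ≤ z → (μ {ω | z ≤ Y ω}).toReal = Real.exp (-(α + (γ - 1)) * z)) ∧
      ∃ ε : ℝ, 0 < ε ∧
        ∀ z : ℝ, 0 ≤ z → (μ {ω | z ≤ Y ω}).toReal = Real.exp (-(α + ε) * z) := by
  set L : ℝ := α + (γ - 1) with hLdef
  -- Step 1: survival function of Y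
  have hSY : ∀ z : ℝ, 0 ≤ z → (μ {ω | z ≤ Y ω}).toReal = Real.exp (-L * z) := by
    intro z hz
    have hset : {ω | z ≤ min (X ω) (Y ω)} = X ⁻¹' Set.Ici z ∩ Y ⁻¹' Set.Ici z := by
      ext ω; simp [le_min_iff]
    have hmul := hindep.measure_inter_preimage_eq_mul (s := Set.Ici z) (t := Set.Ici z)
      measurableSet_Ici measurableSet_Ici
    have h1 : (μ {ω | z ≤ min (X ω) (Y ω)}).toReal
        = (μ {ω | z ≤ X ω}).toReal * (μ {ω | z ≤ Y ω}).toReal := by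
      rw [hset, hmul, ENNReal.toReal_mul]; rfl
    have h2 : Real.exp (-γ * z) = Real.exp (-(1 - α) * z) * (μ {ω | z ≤ Y ω}).toReal := by
      rw [← hmin z hz, h1, hX z hz]
    have hexp : Real.exp (-(1 - α) * z) ≠ 0 := Real.exp_ne_zero _
    have : (μ {ω | z ≤ Y ω}).toReal = Real.exp (-γ * z) / Real.exp (-(1 - α) * z) := by
      rw [h2]; field_simp
    rw [this, ← Real.exp_sub]
    congr 1; rw [hLdef]; ring
  have hL0 : 0 ≤ L := by
    by_contra hneg
    push_neg at hneg
    have h1 := hSY 1 zero_le_one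
    have hle : (μ {ω | (1:ℝ) ≤ Y ω}).toReal ≤ 1 := by
      have h2 : μ {ω | (1:ℝ) ≤ Y ω} ≤ 1 := prob_le_one
      simpa using ENNReal.toReal_mono (by simp) h2
    rw [h1] at hle
    have : (1:ℝ) < Real.exp (-L * 1) := by
      rw [Real.one_lt_exp_iff]
      linarith
    linarith
  -- Step 2: key bound via discretization
  have hbound : ∀ h : ℝ, 0 < h →
      (μ {ω | Y ω < X ω}).toReal
        ≤ (1 - Real.exp (-L * h)) / (1 - Real.exp (-γ * h)) := by
    intro h hh
    set r : ℝ := Real.exp (-γ * h) with hrdef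
    have hr0 : 0 ≤ r := (Real.exp_pos _).le
    have hr1 : r < 1 := by
      rw [hrdef, Real.exp_lt_one_iff]
      nlinarith
    set c : ℝ := 1 - Real.exp (-L * h) with hcdef
    have hc0 : 0 ≤ c := by
      have : Real.exp (-L * h) ≤ 1 := by
        rw [Real.exp_le_one_iff]; nlinarith
      linarith
    set B : ℕ → Set Ω := fun n =>
      Y ⁻¹' Set.Ico (n * h) ((n + 1) * h) ∩ X ⁻¹' Set.Ici (n * h) with hBdef
    -- covering
    have hcover : {ω | Y ω < X ω} ⊆ (⋃ n : ℕ, B n) ∪ {ω | Y ω < 0} := by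
      intro ω hω
      rcases lt_or_ge (Y ω) 0 with hneg | hpos
      · exact Or.inr hneg
      · refine Or.inl (Set.mem_iUnion.2 ⟨⌊Y ω / h⌋₊, ?_, ?_⟩)
        · constructor
          · have := Nat.floor_le (div_nonneg hpos hh.le)
            calc (⌊Y ω / h⌋₊ : ℝ) * h ≤ (Y ω / h) * h := by nlinarith
            _ = Y ω := by field_simp
          · have := Nat.lt_floor_add_one (Y ω / h)
            have h2 : Y ω / h * h < ((⌊Y ω / h⌋₊ : ℝ) + 1) * h := by nlinarith
            calc Y ω = Y ω / h * h := by field_simp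
            _ < ((⌊Y ω / h⌋₊ : ℝ) + 1) * h := h2
        · have h1 : (⌊Y ω / h⌋₊ : ℝ) * h ≤ Y ω := by
            have := Nat.floor_le (div_nonneg hpos hh.le)
            calc (⌊Y ω / h⌋₊ : ℝ) * h ≤ (Y ω / h) * h := by nlinarith
            _ = Y ω := by field_simp
          exact le_of_lt (lt_of_le_of_lt h1 hω)
    have hnull : μ {ω | Y ω < 0} = 0 := by
      have := hY0
      rw [ae_iff] at this
      simpa [not_le] using this
    -- value of each piece
    have hpiece : ∀ n : ℕ, μ (B n)
        = ENNReal.ofReal ((Real.exp (-L * (n * h)) - Real.exp (-L * ((n + 1) * h)))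
            * Real.exp (-(1 - α) * (n * h))) := by
      intro n
      have hmul := hindep.symm.measure_inter_preimage_eq_mul
        (s := Set.Ico ((n:ℝ) * h) ((n + 1) * h)) (t := Set.Ici ((n:ℝ) * h))
        measurableSet_Ico measurableSet_Ici
      have hYIci : ∀ z : ℝ, 0 ≤ z → μ (Y ⁻¹' Set.Ici z) = ENNReal.ofReal (Real.exp (-L * z)) := by
        intro z hz
        have : μ (Y ⁻¹' Set.Ici z) = μ {ω | z ≤ Y ω} := rfl
        rw [this, ← ENNReal.ofReal_toReal (measure_ne_top μ _), hSY z hz]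
      have hXIci : μ (X ⁻¹' Set.Ici ((n:ℝ) * h)) = ENNReal.ofReal (Real.exp (-(1 - α) * (n * h))) := by
        have : μ (X ⁻¹' Set.Ici ((n:ℝ) * h)) = μ {ω | (n:ℝ) * h ≤ X ω} := rfl
        rw [this, ← ENNReal.ofReal_toReal (measure_ne_top μ _),
          hX ((n:ℝ) * h) (by positivity)]
      have hIco : μ (Y ⁻¹' Set.Ico ((n:ℝ) * h) ((n + 1) * h))
          = ENNReal.ofReal (Real.exp (-L * (n * h)) - Real.exp (-L * ((n + 1) * h))) := by
        have hsub : Y ⁻¹' Set.Ici (((n:ℝ) + 1) * h) ⊆ Y ⁻¹' Set.Ici ((n:ℝ) * h) := by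
          apply Set.preimage_mono
          apply Set.Ici_subset_Ici.2
          nlinarith
        have hdiff : Y ⁻¹' Set.Ico ((n:ℝ) * h) ((n + 1) * h)
            = Y ⁻¹' Set.Ici ((n:ℝ) * h) \ Y ⁻¹' Set.Ici (((n:ℝ) + 1) * h) := by
          rw [← Set.preimage_diff, Set.Ici_diff_Ici]
        rw [hdiff, measure_diff hsub (hYm measurableSet_Ici).nullMeasurableSet (measure_ne_top μ _),
          hYIci _ (by positivity), hYIci _ (by positivity),
          ← ENNReal.ofReal_sub _ (Real.exp_pos _).le]
      calc μ (B n) = μ (Y ⁻¹' Set.Ico ((n:ℝ) * h) ((n + 1) * h)) * μ (X ⁻¹' Set.Ici ((n:ℝ) * h)) := hmul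
      _ = _ := by rw [hIco, hXIci, ← ENNReal.ofReal_mul (by nlinarith [Real.exp_le_exp.2 (show -L * (((n:ℝ)+1)*h) ≤ -L * ((n:ℝ)*h) by nlinarith)])]
    -- the geometric series
    set f : ℕ → ℝ := fun n =>
      (Real.exp (-L * (n * h)) - Real.exp (-L * ((n + 1) * h))) * Real.exp (-(1 - α) * (n * h))
      with hfdef
    have hfn : ∀ n : ℕ, f n = c * r ^ n := by
      intro n
      have hrn : r ^ n = Real.exp (-γ * (n * h)) := by
        rw [hrdef, ← Real.exp_nat_mul]; ring_nf
      rw [hfdef]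
      simp only
      rw [hrn, hcdef]
      have e1 : -L * ((n + 1) * h) = -L * (n * h) + -L * h := by ring
      have e2 : -γ * (n * h) = -L * (n * h) + -(1 - α) * (n * h) := by
        rw [hLdef]; ring
      rw [e1, e2, Real.exp_add, Real.exp_add]
      ring
    have hsummable : Summable f := by
      refine Summable.congr ((summable_geometric_of_lt_one hr0 hr1).mul_left c) ?_
      intro n; exact (hfn n).symm
    have htsum : ∑' n : ℕ, f n = c * (1 - r)⁻¹ := by
      rw [tsum_congr hfn, tsum_mul_left, tsum_geometric_of_lt_one hr0 hr1]
    have hf0 : ∀ n, 0 ≤ f n := by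
      intro n; rw [hfn n]; positivity
    have hmono : μ {ω | Y ω < X ω} ≤ ENNReal.ofReal (c * (1 - r)⁻¹) := by
      calc μ {ω | Y ω < X ω} ≤ μ ((⋃ n : ℕ, B n) ∪ {ω | Y ω < 0}) := measure_mono hcover
      _ ≤ μ (⋃ n : ℕ, B n) + μ {ω | Y ω < 0} := measure_union_le _ _
      _ = μ (⋃ n : ℕ, B n) := by rw [hnull, add_zero]
      _ ≤ ∑' n : ℕ, μ (B n) := measure_iUnion_le _
      _ = ∑' n : ℕ, ENNReal.ofReal (f n) := by
        refine tsum_congr fun n => ?_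
        exact hpiece n
      _ = ENNReal.ofReal (∑' n : ℕ, f n) := (ENNReal.ofReal_tsum_of_nonneg hf0 hsummable).symm
      _ = ENNReal.ofReal (c * (1 - r)⁻¹) := by rw [htsum]
    have := ENNReal.toReal_le_of_le_ofReal (mul_nonneg hc0 (inv_nonneg.2 (by linarith))) hmono
    calc (μ {ω | Y ω < X ω}).toReal ≤ c * (1 - r)⁻¹ := this
    _ = (1 - Real.exp (-L * h)) / (1 - Real.exp (-γ * h)) := by
      rw [hcdef, hrdef]; ring
  -- Step 3: take h → 0⁺
  have hder : ∀ c : ℝ, HasDerivAt (fun x : ℝ => 1 - Real.exp (-c * x)) c 0 := by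
    intro c
    have h1 : HasDerivAt (fun x : ℝ => -c * x) (-c * 1) 0 := (hasDerivAt_id 0).const_mul (-c)
    have h2 := (h1.exp).const_sub 1
    simpa using h2
  have hslope : ∀ c : ℝ, Filter.Tendsto (fun x : ℝ => (1 - Real.exp (-c * x)) / x)
      (nhdsWithin 0 (Set.Ioi 0)) (nhds c) := by
    intro c
    have h1 := hasDerivAt_iff_tendsto_slope.mp (hder c)
    have h2 : Filter.Tendsto (slope (fun x : ℝ => 1 - Real.exp (-c * x)) 0)
        (nhdsWithin 0 (Set.Ioi 0)) (nhds c) :=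
      h1.mono_left (nhdsWithin_mono 0 (fun x hx => ne_of_gt hx))
    refine h2.congr' ?_
    filter_upwards [self_mem_nhdsWithin] with x hx
    rw [slope_def_field]
    simp [div_eq_iff (ne_of_gt (Set.mem_Ioi.mp hx))]
  have htend : Filter.Tendsto (fun h : ℝ => (1 - Real.exp (-L * h)) / (1 - Real.exp (-γ * h)))
      (nhdsWithin 0 (Set.Ioi 0)) (nhds (L / γ)) := by
    have := (hslope L).div (hslope γ) (ne_of_gt hγ)
    refine this.congr' ?_
    filter_upwards [self_mem_nhdsWithin] with x hx
    exact div_div_div_cancel_right₀ (ne_of_gt (hx : (0:ℝ) < x)) _ _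
  have hPle : (μ {ω | Y ω < X ω}).toReal ≤ L / γ := by
    refine ge_of_tendsto htend ?_
    filter_upwards [self_mem_nhdsWithin] with x hx
    exact hbound x hx
  have hαγ : α * γ < L := (lt_div_iff₀ hγ).mp (lt_of_lt_of_le hprofit hPle)
  have hγ1 : 1 < γ := by nlinarith
  exact ⟨hγ1, hSY, ⟨γ - 1, by linarith, hSY⟩⟩
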